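/- Let 1<p,q<∞ with 1/p+1/q=1, let μ be a compactly supported Borel probability measure on ℝ with support in [-M,M], and let Λ = {λ_n}, Ω = {ω_n} ⊂ ℝ with |λ_n − ω_n| ≤ C for all n. If {e_{λ_n}} is a q-frame for L^p(μ) with bounds A, B, and C is small enough that A^{1/q} − (B(e^{C^p}−1)^{q−1}(e^{(2πM)^q}−1))^{1/q} > 0, then {e_{ω_n}} is a q-frame for L^p(μ) with lower bound (A^{1/q} − (B(e^{C^p}−1)^{q−1}(e^{(2πM)^q}−1))^{1/q})^q. -/

import Mathlib

open MeasureTheory Complex Filter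
open scoped ENNReal NNReal Real

/-- The Fourier transform of the measure `f dμ` on `ℝ` at `t`. -/
noncomputable def FT1 (μ : Measure ℝ) (f : ℝ → ℂ) (t : ℝ) : ℂ :=
  ∫ x, f x * Complex.exp (-(2 * Real.pi * t * x : ℝ) * Complex.I) ∂μ

private lemma ofReal_exp_tail {x : ℝ} (hx : 0 ≤ x) :
    ∑' k : ℕ, ENNReal.ofReal (x ^ (k+1) / (k+1).factorial) = ENNReal.ofReal (Real.exp x - 1) := by
  have hs : Summable (fun n : ℕ => x ^ n / n.factorial) := Real.summable_pow_div_factorial x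
  have hexp : Real.exp x = ∑' n : ℕ, x ^ n / n.factorial := by
    rw [Real.exp_eq_exp_ℝ, NormedSpace.exp_eq_tsum_div]
  have h0 : ∑' k : ℕ, x ^ (k+1) / (k+1).factorial = Real.exp x - 1 := by
    have h := Summable.tsum_eq_zero_add hs
    simp only [pow_zero, Nat.factorial_zero, Nat.cast_one, div_one] at h
    rw [hexp]; linarith
  rw [← h0, ← ENNReal.ofReal_tsum_of_nonneg]
  · intro n; positivity
  · exact (summable_nat_add_iff 1).2 hs

private lemma tsum_mul_le_holder {p q : ℝ} (hpq : Real.HolderConjugate p q) (u v : ℕ → ℝ≥0∞) :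
    ∑' k, u k * v k ≤ (∑' k, u k ^ p) ^ (1/p) * (∑' k, v k ^ q) ^ (1/q) := by
  have h := ENNReal.lintegral_mul_le_Lp_mul_Lq (Measure.count (α := ℕ)) hpq
    (measurable_of_countable u).aemeasurable (measurable_of_countable v).aemeasurable
  simpa [MeasureTheory.lintegral_count] using h

private lemma tsum_Lq_add_le {q : ℝ} (hq : 1 ≤ q) (u v : ℕ → ℝ≥0∞) :
    (∑' k, (u k + v k) ^ q) ^ (1/q) ≤ (∑' k, u k ^ q) ^ (1/q) + (∑' k, v k ^ q) ^ (1/q) := by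
  have h := ENNReal.lintegral_Lp_add_le (μ := Measure.count (α := ℕ))
    (measurable_of_countable u).aemeasurable (measurable_of_countable v).aemeasurable hq
  simpa [MeasureTheory.lintegral_count] using h

private lemma enn_norm_tsum_le (h : ℕ → ℂ) :
    (‖∑' k, h k‖₊ : ℝ≥0∞) ≤ ∑' k, (‖h k‖₊ : ℝ≥0∞) := by
  by_cases hs : Summable fun k => ‖h k‖₊
  · rw [← ENNReal.coe_tsum hs]
    exact_mod_cast nnnorm_tsum_le hs
  · have htop : ∑' k, (‖h k‖₊ : ℝ≥0∞) = ⊤ :=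
      ENNReal.tsum_coe_eq_top_iff_not_summable_coe.2 (by rwa [NNReal.summable_coe])
    rw [htop]
    exact le_top

private lemma pow_rpow_comm {x : ℝ} (hx : 0 ≤ x) (n : ℕ) (r : ℝ) :
    (x ^ n) ^ r = (x ^ r) ^ n := by
  rw [← Real.rpow_natCast x n, ← Real.rpow_mul hx, mul_comm, Real.rpow_mul hx,
    Real.rpow_natCast]

private lemma FT1_hasSum (μ : Measure ℝ) [IsProbabilityMeasure μ] {M : ℝ}
    (hae : ∀ᵐ x ∂μ, |x| ≤ M) {f : ℝ → ℂ} (hf : Integrable f μ) (l w : ℝ) :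
    HasSum (fun k : ℕ => ((((2 * Real.pi * (l - w) : ℝ) : ℂ) * Complex.I) ^ k / (k.factorial : ℂ))
        * FT1 μ (fun x => (x : ℂ) ^ k * f x) l) (FT1 μ f w) := by
  set z : ℂ := (((2 * Real.pi * (l - w) : ℝ) : ℂ) * Complex.I) with hzdef
  set F : ℕ → ℝ → ℂ := fun k x =>
    (z ^ k / (k.factorial : ℂ)) *
      ((x : ℂ) ^ k * f x * Complex.exp (-(2 * Real.pi * l * x : ℝ) * Complex.I)) with hFdef
  have hnorm1 : ∀ (t x : ℝ), ‖Complex.exp (-(2 * Real.pi * t * x : ℝ) * Complex.I)‖ = 1 := by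
    intro t x
    rw [← Complex.ofReal_neg, Complex.norm_exp_ofReal_mul_I]
  have hGb : ∀ (k : ℕ), ∀ᵐ (x : ℝ) ∂μ,
      ‖(x : ℂ) ^ k * f x * Complex.exp (-(2 * Real.pi * l * x : ℝ) * Complex.I)‖
        ≤ M ^ k * ‖f x‖ := by
    intro k
    filter_upwards [hae] with x hx
    rw [norm_mul, norm_mul, hnorm1, mul_one, norm_pow, Complex.norm_real, Real.norm_eq_abs]
    have : |x| ^ k ≤ M ^ k := pow_le_pow_left₀ (abs_nonneg x) hx k
    exact mul_le_mul_of_nonneg_right this (norm_nonneg _)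
  have hG_meas : ∀ k : ℕ, AEStronglyMeasurable
      (fun x : ℝ => (x : ℂ) ^ k * f x * Complex.exp (-(2 * Real.pi * l * x : ℝ) * Complex.I)) μ := by
    intro k
    refine (((Complex.continuous_ofReal.pow k).aestronglyMeasurable.mul hf.1).mul ?_)
    exact (Complex.continuous_exp.comp (by fun_prop)).aestronglyMeasurable
  have hGint : ∀ k : ℕ, Integrable
      (fun x : ℝ => (x : ℂ) ^ k * f x * Complex.exp (-(2 * Real.pi * l * x : ℝ) * Complex.I)) μ := by
    intro k
    exact Integrable.mono' ((hf.norm).const_mul (M ^ k)) (hG_meas k) (hGb k)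
  have hFint : ∀ k : ℕ, Integrable (F k) μ := fun k => ((hGint k).const_mul _)
  have hGnormint : ∀ k : ℕ,
      ∫ x, ‖(x : ℂ) ^ k * f x * Complex.exp (-(2 * Real.pi * l * x : ℝ) * Complex.I)‖ ∂μ
        ≤ M ^ k * ∫ x, ‖f x‖ ∂μ := by
    intro k
    rw [← integral_const_mul]
    exact integral_mono_ae (hGint k).norm ((hf.norm).const_mul (M ^ k)) (hGb k)
  have hsum : Summable fun k : ℕ => ∫ x, ‖F k x‖ ∂μ := by
    refine Summable.of_nonneg_of_le (fun k => integral_nonneg fun x => norm_nonneg _)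
      (fun k => ?_) (((Real.summable_pow_div_factorial (‖z‖ * M)).mul_right (∫ x, ‖f x‖ ∂μ)))
    have h1 : ∫ x, ‖F k x‖ ∂μ = ‖z ^ k / (k.factorial : ℂ)‖ * ∫ x,
        ‖(x : ℂ) ^ k * f x * Complex.exp (-(2 * Real.pi * l * x : ℝ) * Complex.I)‖ ∂μ := by
      simp only [hFdef, norm_mul]
      exact integral_const_mul _ _
    rw [h1]
    have hz : ‖z ^ k / (k.factorial : ℂ)‖ = ‖z‖ ^ k / k.factorial := by
      rw [norm_div, norm_pow]
      simp
    rw [hz]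
    calc ‖z‖ ^ k / k.factorial * ∫ x,
          ‖(x : ℂ) ^ k * f x * Complex.exp (-(2 * Real.pi * l * x : ℝ) * Complex.I)‖ ∂μ
        ≤ ‖z‖ ^ k / k.factorial * (M ^ k * ∫ x, ‖f x‖ ∂μ) := by
          refine mul_le_mul_of_nonneg_left (hGnormint k) (by positivity)
      _ = (‖z‖ * M) ^ k / k.factorial * ∫ x, ‖f x‖ ∂μ := by rw [mul_pow]; ring
  have key := hasSum_integral_of_summable_integral_norm hFint hsum
  have hpt : ∀ x : ℝ, ∑' k, F k x =
      f x * Complex.exp (-(2 * Real.pi * w * x : ℝ) * Complex.I) := by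
    intro x
    have hz : Complex.exp (((2 * Real.pi * (l - w) * x : ℝ) : ℂ) * Complex.I)
        = ∑' k : ℕ, (((2 * Real.pi * (l - w) * x : ℝ) : ℂ) * Complex.I) ^ k / k.factorial := by
      rw [Complex.exp_eq_exp_ℂ, NormedSpace.exp_eq_tsum_div]
    have hterm : ∀ k : ℕ, F k x =
        (f x * Complex.exp (-(2 * Real.pi * l * x : ℝ) * Complex.I)) *
          ((((2 * Real.pi * (l - w) * x : ℝ) : ℂ) * Complex.I) ^ k / k.factorial) := by
      intro k
      have hzz : (((2 * Real.pi * (l - w) * x : ℝ) : ℂ) * Complex.I) = z * (x : ℂ) := by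
        rw [hzdef]; push_cast; ring
      simp only [hFdef]
      rw [hzz, mul_pow]
      ring
    rw [tsum_congr hterm, tsum_mul_left, ← hz, mul_assoc, ← Complex.exp_add]
    congr 2
    push_cast
    ring
  have h2 : ∫ x, ∑' k, F k x ∂μ = FT1 μ f w := by
    simp only [hpt]
    rfl
  rw [h2] at key
  have h1 : (fun k : ℕ => ∫ x, F k x ∂μ)
      = fun k : ℕ => (z ^ k / (k.factorial : ℂ)) * FT1 μ (fun x => (x : ℂ) ^ k * f x) l := by
    funext k
    simp only [hFdef]
    rw [integral_const_mul]
    rfl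
  rwa [h1] at key

/-- Stability of `q`-frames of exponentials: if `{e_{λ_n}}` is a `q`-frame for `L^p(μ)` with
bounds `A, B`, `|λ_n − ω_n| ≤ C`, and `C` is small enough that
`A^{1/q} − (B(e^{C^p}−1)^{q−1}(e^{(2πM)^q}−1))^{1/q} > 0`, then `{e_{ω_n}}` is a `q`-frame
with lower bound `(A^{1/q} − (B(e^{C^p}−1)^{q−1}(e^{(2πM)^q}−1))^{1/q})^q`. -/
theorem stmt7 (p q : ℝ) (hp : 1 < p) (hq : 1 < q) (hpq : 1 / p + 1 / q = 1)
    (μ : Measure ℝ) [IsProbabilityMeasure μ] (M : ℝ) (hM : 0 < M)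
    (hsupp : μ (Set.Icc (-M) M)ᶜ = 0)
    (lam ω : ℕ → ℝ) (C : ℝ) (hC : 0 < C) (hclose : ∀ n, |lam n - ω n| ≤ C)
    (A B : ℝ) (hA : 0 < A) (hB : 0 < B)
    (hframe : ∀ f : ℝ → ℂ, MemLp f (ENNReal.ofReal p) μ →
      ENNReal.ofReal A * (eLpNorm f (ENNReal.ofReal p) μ) ^ q ≤
        ∑' n : ℕ, (‖FT1 μ f (lam n)‖₊ : ℝ≥0∞) ^ q ∧
      ∑' n : ℕ, (‖FT1 μ f (lam n)‖₊ : ℝ≥0∞) ^ q ≤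
        ENNReal.ofReal B * (eLpNorm f (ENNReal.ofReal p) μ) ^ q)
    (hsmall : 0 < A ^ (1 / q) -
      (B * (Real.exp (C ^ p) - 1) ^ (q - 1) *
        (Real.exp ((2 * Real.pi * M) ^ q) - 1)) ^ (1 / q)) :
    ∃ B' > 0, ∀ f : ℝ → ℂ, MemLp f (ENNReal.ofReal p) μ →
      ENNReal.ofReal
          ((A ^ (1 / q) -
              (B * (Real.exp (C ^ p) - 1) ^ (q - 1) *
                (Real.exp ((2 * Real.pi * M) ^ q) - 1)) ^ (1 / q)) ^ q) *
          (eLpNorm f (ENNReal.ofReal p) μ) ^ q ≤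
        ∑' n : ℕ, (‖FT1 μ f (ω n)‖₊ : ℝ≥0∞) ^ q ∧
      ∑' n : ℕ, (‖FT1 μ f (ω n)‖₊ : ℝ≥0∞) ^ q ≤
        ENNReal.ofReal B' * (eLpNorm f (ENNReal.ofReal p) μ) ^ q := by
  have hp0 : (0:ℝ) < p := lt_trans one_pos hp
  have hq0 : (0:ℝ) < q := lt_trans one_pos hq
  have hπM : (0:ℝ) < 2 * Real.pi * M := by positivity
  have hCp : (0:ℝ) < C ^ p := Real.rpow_pos_of_pos hC p
  have hπMq : (0:ℝ) < (2 * Real.pi * M) ^ q := Real.rpow_pos_of_pos hπM q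
  have he1 : (0:ℝ) < Real.exp (C ^ p) - 1 := by
    nlinarith [Real.add_one_lt_exp (ne_of_gt hCp)]
  have he2 : (0:ℝ) < Real.exp ((2 * Real.pi * M) ^ q) - 1 := by
    nlinarith [Real.add_one_lt_exp (ne_of_gt hπMq)]
  have hR : 0 < B * (Real.exp (C ^ p) - 1) ^ (q - 1) *
      (Real.exp ((2 * Real.pi * M) ^ q) - 1) :=
    mul_pos (mul_pos hB (Real.rpow_pos_of_pos he1 _)) he2
  set E1 : ℝ := Real.exp (C ^ p) - 1 with hE1def
  set e2 : ℝ := Real.exp ((2 * Real.pi * M) ^ q) - 1 with he2def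
  set R : ℝ := B * E1 ^ (q - 1) * e2 with hRdef
  have hpq' : Real.HolderConjugate p q := Real.holderConjugate_iff.2 ⟨hp, by rw [inv_eq_one_div, inv_eq_one_div]; exact hpq⟩
  have hqexp : (1/p) * q = q - 1 := by
    have h1p : 1/p = 1 - 1/q := by linarith
    rw [h1p, sub_mul, one_mul, one_div, inv_mul_cancel₀ hq0.ne']
  have hrq : ∀ x : ℝ≥0∞, (x ^ (1/q : ℝ)) ^ (q : ℝ) = x := by
    intro x
    rw [← ENNReal.rpow_mul, one_div_mul_cancel hq0.ne', ENNReal.rpow_one]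
  have hqr : ∀ x : ℝ≥0∞, (x ^ (q : ℝ)) ^ (1/q : ℝ) = x := by
    intro x
    rw [← ENNReal.rpow_mul, mul_one_div_cancel hq0.ne', ENNReal.rpow_one]
  refine ⟨(B ^ (1/q) + R ^ (1/q)) ^ q, Real.rpow_pos_of_pos
    (add_pos (Real.rpow_pos_of_pos hB _) (Real.rpow_pos_of_pos hR _)) q, fun f hf => ?_⟩
  set N := eLpNorm f (ENNReal.ofReal p) μ with hNdef
  have hNtop : N ≠ ⊤ := hf.eLpNorm_ne_top
  have hae : ∀ᵐ x ∂μ, |x| ≤ M := by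
    have hset : {x : ℝ | ¬ |x| ≤ M} = (Set.Icc (-M) M)ᶜ := by ext x; simp [abs_le]
    rw [ae_iff, hset]; exact hsupp
  have hint : Integrable f μ := hf.integrable (ENNReal.one_le_ofReal.2 hp.le)
  have hg_meas : ∀ k : ℕ, AEStronglyMeasurable (fun x : ℝ => (x:ℂ)^k * f x) μ :=
    fun k => (Complex.continuous_ofReal.pow k).aestronglyMeasurable.mul hf.1
  have hMk : ∀ k : ℕ, ‖((M^k : ℝ) : ℂ)‖ = M ^ k := by
    intro k
    rw [Complex.norm_real, Real.norm_eq_abs, abs_of_pos (pow_pos hM k)]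
  have hgb : ∀ k : ℕ, ∀ᵐ (x:ℝ) ∂μ, ‖(x:ℂ)^k * f x‖ ≤ ‖((M^k : ℝ) : ℂ) * f x‖ := by
    intro k
    filter_upwards [hae] with x hx
    rw [norm_mul, norm_mul, norm_pow, Complex.norm_real, Real.norm_eq_abs, hMk]
    exact mul_le_mul_of_nonneg_right (pow_le_pow_left₀ (abs_nonneg x) hx k) (norm_nonneg _)
  have hg_mem : ∀ k : ℕ, MemLp (fun x : ℝ => (x:ℂ)^k * f x) (ENNReal.ofReal p) μ := by
    intro k
    exact MemLp.of_le (hf.const_mul ((M^k : ℝ) : ℂ)) (hg_meas k) (hgb k)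
  have hg_norm : ∀ k : ℕ, eLpNorm (fun x : ℝ => (x:ℂ)^k * f x) (ENNReal.ofReal p) μ
      ≤ ENNReal.ofReal (M^k) * N := by
    intro k
    refine le_trans (eLpNorm_mono_ae (hgb k)) ?_
    have heq : (fun x : ℝ => ((M^k:ℝ):ℂ) * f x) = ((M^k:ℝ):ℂ) • f := rfl
    rw [heq, eLpNorm_const_smul]
    refine le_of_eq ?_
    congr 1
    rw [← ofReal_norm, hMk]
  -- series expansion of the difference
  have hexp : ∀ n, HasSum (fun k : ℕ =>
      ((((2 * Real.pi * (lam n - ω n) : ℝ) : ℂ) * Complex.I) ^ k / (k.factorial : ℂ))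
        * FT1 μ (fun x => (x:ℂ)^k * f x) (lam n)) (FT1 μ f (ω n)) :=
    fun n => FT1_hasSum μ hae hint (lam n) (ω n)
  have hdiff : ∀ n, FT1 μ f (ω n) - FT1 μ f (lam n)
      = ∑' k : ℕ, ((((2 * Real.pi * (lam n - ω n) : ℝ) : ℂ) * Complex.I) ^ (k+1)
          / ((k+1).factorial : ℂ)) * FT1 μ (fun x => (x:ℂ)^(k+1) * f x) (lam n) := by
    intro n
    have h := Summable.tsum_eq_zero_add (hexp n).summable
    rw [(hexp n).tsum_eq] at h
    simp only [pow_zero, Nat.factorial_zero, Nat.cast_one, div_one, one_mul] at h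
    rw [h, add_sub_cancel_left]
  -- the coefficient norm
  have hcnorm : ∀ (n k : ℕ),
      (‖(((2 * Real.pi * (lam n - ω n) : ℝ) : ℂ) * Complex.I) ^ (k+1)
          / ((k+1).factorial : ℂ)‖₊ : ℝ≥0∞)
        = ENNReal.ofReal ((2*Real.pi*|lam n - ω n|)^(k+1) / (k+1).factorial) := by
    intro n k
    rw [← ENNReal.ofReal_coe_nnreal, coe_nnnorm]
    congr 1
    rw [norm_div, norm_pow, norm_mul, Complex.norm_real, Complex.norm_I, mul_one,
      Real.norm_eq_abs, abs_mul, abs_of_pos Real.two_pi_pos]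
    norm_num
  -- pointwise estimate on the difference
  have hd_le : ∀ n, (‖FT1 μ f (ω n) - FT1 μ f (lam n)‖₊ : ℝ≥0∞)
      ≤ ∑' k : ℕ, ENNReal.ofReal ((2*Real.pi*|lam n - ω n|)^(k+1) / (k+1).factorial) *
          (‖FT1 μ (fun x => (x:ℂ)^(k+1) * f x) (lam n)‖₊ : ℝ≥0∞) := by
    intro n
    rw [hdiff n]
    refine le_trans (enn_norm_tsum_le _) (le_of_eq (tsum_congr fun k => ?_))
    rw [nnnorm_mul, ENNReal.coe_mul, hcnorm]
  -- Hölder step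
  have hn_holder : ∀ n, (‖FT1 μ f (ω n) - FT1 μ f (lam n)‖₊ : ℝ≥0∞)
      ≤ ENNReal.ofReal (E1 ^ (1/p)) *
        (∑' k : ℕ, ENNReal.ofReal (((2*Real.pi)^q)^(k+1) / (k+1).factorial) *
          (‖FT1 μ (fun x => (x:ℂ)^(k+1) * f x) (lam n)‖₊ : ℝ≥0∞) ^ (q:ℝ)) ^ (1/q : ℝ) := by
    intro n
    refine (hd_le n).trans ?_
    have hsplit : ∀ k : ℕ, ENNReal.ofReal ((2*Real.pi*|lam n - ω n|)^(k+1) / (k+1).factorial) *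
          (‖FT1 μ (fun x => (x:ℂ)^(k+1) * f x) (lam n)‖₊ : ℝ≥0∞)
        = (ENNReal.ofReal (|lam n - ω n|^(k+1) / ((k+1).factorial : ℝ) ^ (1/p : ℝ))) *
          (ENNReal.ofReal ((2*Real.pi)^(k+1) / ((k+1).factorial : ℝ) ^ (1/q : ℝ)) *
            (‖FT1 μ (fun x => (x:ℂ)^(k+1) * f x) (lam n)‖₊ : ℝ≥0∞)) := by
      intro k
      have hm : (0:ℝ) < ((k+1).factorial : ℝ) := by positivity
      rw [← mul_assoc, ← ENNReal.ofReal_mul (by positivity)]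
      congr 2
      rw [div_mul_div_comm, ← Real.rpow_add hm, hpq, Real.rpow_one, mul_pow]
      ring
    rw [tsum_congr hsplit]
    refine (tsum_mul_le_holder hpq' _ _).trans ?_
    refine mul_le_mul' ?_ (le_of_eq ?_)
    · have hu : ∀ k:ℕ, (ENNReal.ofReal (|lam n - ω n|^(k+1) / ((k+1).factorial : ℝ) ^ (1/p : ℝ))) ^ (p:ℝ)
          = ENNReal.ofReal ((|lam n - ω n| ^ p) ^ (k+1) / (k+1).factorial) := by
        intro k
        have hm : (0:ℝ) < ((k+1).factorial : ℝ) := by positivity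
        rw [ENNReal.ofReal_rpow_of_nonneg (by positivity) hp0.le]
        congr 1
        rw [Real.div_rpow (by positivity) (by positivity),
          pow_rpow_comm (abs_nonneg _) (k+1) p, ← Real.rpow_mul hm.le,
          one_div_mul_cancel hp0.ne', Real.rpow_one]
      rw [tsum_congr hu, ofReal_exp_tail (Real.rpow_nonneg (abs_nonneg _) p)]
      rw [ENNReal.ofReal_rpow_of_nonneg
        (sub_nonneg.2 (Real.one_le_exp (Real.rpow_nonneg (abs_nonneg _) p))) (by positivity)]
      refine ENNReal.ofReal_le_ofReal ?_
      refine Real.rpow_le_rpow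
        (sub_nonneg.2 (Real.one_le_exp (Real.rpow_nonneg (abs_nonneg _) p))) ?_ (by positivity)
      have : |lam n - ω n| ^ p ≤ C ^ p :=
        Real.rpow_le_rpow (abs_nonneg _) (hclose n) hp0.le
      rw [hE1def]
      have := Real.exp_le_exp.2 this
      linarith
    · congr 1
      refine tsum_congr fun k => ?_
      have hm : (0:ℝ) < ((k+1).factorial : ℝ) := by positivity
      rw [ENNReal.mul_rpow_of_nonneg _ _ hq0.le,
        ENNReal.ofReal_rpow_of_nonneg (by positivity) hq0.le]
      congr 2
      rw [Real.div_rpow (by positivity) (by positivity),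
        pow_rpow_comm (by positivity) (k+1) q, ← Real.rpow_mul hm.le,
        one_div_mul_cancel hq0.ne', Real.rpow_one]
  -- raising to power q
  have hDn : ∀ n, (‖FT1 μ f (ω n) - FT1 μ f (lam n)‖₊ : ℝ≥0∞) ^ (q:ℝ)
      ≤ ENNReal.ofReal (E1 ^ (q-1)) *
        ∑' k : ℕ, ENNReal.ofReal (((2*Real.pi)^q)^(k+1) / (k+1).factorial) *
          (‖FT1 μ (fun x => (x:ℂ)^(k+1) * f x) (lam n)‖₊ : ℝ≥0∞) ^ (q:ℝ) := by
    intro n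
    refine le_trans (ENNReal.rpow_le_rpow (hn_holder n) hq0.le) (le_of_eq ?_)
    rw [ENNReal.mul_rpow_of_nonneg _ _ hq0.le, hrq,
      ENNReal.ofReal_rpow_of_nonneg (by positivity) hq0.le, ← Real.rpow_mul he1.le, hqexp]
  -- total difference estimate
  have hWk : ∀ k : ℕ, ∑' n, (‖FT1 μ (fun x => (x:ℂ)^(k+1) * f x) (lam n)‖₊ : ℝ≥0∞) ^ (q:ℝ)
      ≤ ENNReal.ofReal B * (ENNReal.ofReal (M^(k+1)) * N) ^ (q:ℝ) := by
    intro k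
    refine le_trans (hframe _ (hg_mem (k+1))).2 ?_
    exact mul_le_mul_right (ENNReal.rpow_le_rpow (hg_norm (k+1)) hq0.le) _
  have hterm : ∀ k : ℕ, ENNReal.ofReal (((2*Real.pi)^q)^(k+1) / (k+1).factorial) *
        (ENNReal.ofReal B * (ENNReal.ofReal (M^(k+1)) * N) ^ (q:ℝ))
      = ENNReal.ofReal B * N ^ (q:ℝ) *
          ENNReal.ofReal (((2*Real.pi*M)^q)^(k+1) / (k+1).factorial) := by
    intro k
    rw [ENNReal.mul_rpow_of_nonneg _ _ hq0.le,
      ENNReal.ofReal_rpow_of_nonneg (by positivity) hq0.le,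
      pow_rpow_comm hM.le (k+1) q]
    rw [show ENNReal.ofReal (((2*Real.pi)^q)^(k+1) / (k+1).factorial) *
        (ENNReal.ofReal B * (ENNReal.ofReal ((M^q)^(k+1)) * N ^ (q:ℝ)))
      = ENNReal.ofReal B * N^(q:ℝ) *
        (ENNReal.ofReal (((2*Real.pi)^q)^(k+1) / (k+1).factorial) *
          ENNReal.ofReal ((M^q)^(k+1))) from by ring]
    rw [← ENNReal.ofReal_mul (by positivity)]
    congr 2
    rw [div_mul_eq_mul_div, ← mul_pow, ← Real.mul_rpow (by positivity) hM.le]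
  have hD : ∑' n, (‖FT1 μ f (ω n) - FT1 μ f (lam n)‖₊ : ℝ≥0∞) ^ (q:ℝ)
      ≤ ENNReal.ofReal R * N ^ (q:ℝ) := by
    calc ∑' n, (‖FT1 μ f (ω n) - FT1 μ f (lam n)‖₊ : ℝ≥0∞) ^ (q:ℝ)
        ≤ ∑' n, ENNReal.ofReal (E1 ^ (q-1)) *
            ∑' k : ℕ, ENNReal.ofReal (((2*Real.pi)^q)^(k+1) / (k+1).factorial) *
              (‖FT1 μ (fun x => (x:ℂ)^(k+1) * f x) (lam n)‖₊ : ℝ≥0∞) ^ (q:ℝ) :=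
          ENNReal.tsum_le_tsum hDn
      _ = ENNReal.ofReal (E1 ^ (q-1)) * ∑' n, ∑' k : ℕ,
            ENNReal.ofReal (((2*Real.pi)^q)^(k+1) / (k+1).factorial) *
              (‖FT1 μ (fun x => (x:ℂ)^(k+1) * f x) (lam n)‖₊ : ℝ≥0∞) ^ (q:ℝ) :=
          ENNReal.tsum_mul_left
      _ = ENNReal.ofReal (E1 ^ (q-1)) * ∑' k : ℕ,
            ENNReal.ofReal (((2*Real.pi)^q)^(k+1) / (k+1).factorial) *
              ∑' n, (‖FT1 μ (fun x => (x:ℂ)^(k+1) * f x) (lam n)‖₊ : ℝ≥0∞) ^ (q:ℝ) := by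
          rw [ENNReal.tsum_comm]
          exact congrArg _ (tsum_congr fun k => ENNReal.tsum_mul_left)
      _ ≤ ENNReal.ofReal (E1 ^ (q-1)) * ∑' k : ℕ,
            ENNReal.ofReal (((2*Real.pi)^q)^(k+1) / (k+1).factorial) *
              (ENNReal.ofReal B * (ENNReal.ofReal (M^(k+1)) * N) ^ (q:ℝ)) :=
          mul_le_mul_right (ENNReal.tsum_le_tsum fun k => mul_le_mul_right (hWk k) _) _
      _ = ENNReal.ofReal (E1 ^ (q-1)) * ∑' k : ℕ, ENNReal.ofReal B * N ^ (q:ℝ) *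
            ENNReal.ofReal (((2*Real.pi*M)^q)^(k+1) / (k+1).factorial) := by
          rw [tsum_congr hterm]
      _ = ENNReal.ofReal (E1 ^ (q-1)) * (ENNReal.ofReal B * N ^ (q:ℝ) * ENNReal.ofReal e2) := by
          rw [ENNReal.tsum_mul_left, ofReal_exp_tail hπMq.le, he2def]
      _ = ENNReal.ofReal R * N ^ (q:ℝ) := by
          rw [hRdef, ENNReal.ofReal_mul (mul_nonneg hB.le (Real.rpow_nonneg he1.le _)),
            ENNReal.ofReal_mul hB.le]
          ring
  -- Minkowski-type assembly
  set Sω := ∑' n, (‖FT1 μ f (ω n)‖₊ : ℝ≥0∞) ^ (q:ℝ) with hSo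
  set Sl := ∑' n, (‖FT1 μ f (lam n)‖₊ : ℝ≥0∞) ^ (q:ℝ) with hSl
  set D := ∑' n, (‖FT1 μ f (ω n) - FT1 μ f (lam n)‖₊ : ℝ≥0∞) ^ (q:ℝ) with hDdef
  have h1q : (0:ℝ) ≤ 1/q := by positivity
  have hDq : D ^ (1/q:ℝ) ≤ ENNReal.ofReal (R ^ (1/q)) * N := by
    refine le_trans (ENNReal.rpow_le_rpow hD h1q) (le_of_eq ?_)
    rw [ENNReal.mul_rpow_of_nonneg _ _ h1q, hqr, ENNReal.ofReal_rpow_of_nonneg hR.le h1q]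
  have hSlq : Sl ^ (1/q:ℝ) ≤ ENNReal.ofReal (B ^ (1/q)) * N := by
    refine le_trans (ENNReal.rpow_le_rpow (hframe f hf).2 h1q) (le_of_eq ?_)
    rw [ENNReal.mul_rpow_of_nonneg _ _ h1q, hqr, ENNReal.ofReal_rpow_of_nonneg hB.le h1q]
  have hAq : ENNReal.ofReal (A ^ (1/q)) * N ≤ Sl ^ (1/q:ℝ) := by
    refine le_trans (le_of_eq ?_) (ENNReal.rpow_le_rpow (hframe f hf).1 h1q)
    rw [ENNReal.mul_rpow_of_nonneg _ _ h1q, hqr, ENNReal.ofReal_rpow_of_nonneg hA.le h1q]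
  have htri1 : Sω ^ (1/q:ℝ) ≤ Sl ^ (1/q:ℝ) + D ^ (1/q:ℝ) := by
    refine le_trans ?_ (tsum_Lq_add_le hq.le (fun n => (‖FT1 μ f (lam n)‖₊ : ℝ≥0∞))
      (fun n => (‖FT1 μ f (ω n) - FT1 μ f (lam n)‖₊ : ℝ≥0∞)))
    refine ENNReal.rpow_le_rpow (ENNReal.tsum_le_tsum fun n => ?_) h1q
    refine ENNReal.rpow_le_rpow ?_ hq0.le
    have h1 : FT1 μ f (ω n) = FT1 μ f (lam n) + (FT1 μ f (ω n) - FT1 μ f (lam n)) := by ring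
    calc (‖FT1 μ f (ω n)‖₊ : ℝ≥0∞)
        = ‖FT1 μ f (lam n) + (FT1 μ f (ω n) - FT1 μ f (lam n))‖₊ := by rw [← h1]
      _ ≤ _ := by exact_mod_cast nnnorm_add_le _ _
  have htri2 : Sl ^ (1/q:ℝ) ≤ Sω ^ (1/q:ℝ) + D ^ (1/q:ℝ) := by
    refine le_trans ?_ (tsum_Lq_add_le hq.le (fun n => (‖FT1 μ f (ω n)‖₊ : ℝ≥0∞))
      (fun n => (‖FT1 μ f (ω n) - FT1 μ f (lam n)‖₊ : ℝ≥0∞)))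
    refine ENNReal.rpow_le_rpow (ENNReal.tsum_le_tsum fun n => ?_) h1q
    refine ENNReal.rpow_le_rpow ?_ hq0.le
    have h1 : FT1 μ f (lam n) = FT1 μ f (ω n) + -(FT1 μ f (ω n) - FT1 μ f (lam n)) := by ring
    calc (‖FT1 μ f (lam n)‖₊ : ℝ≥0∞)
        = ‖FT1 μ f (ω n) + -(FT1 μ f (ω n) - FT1 μ f (lam n))‖₊ := by rw [← h1]
      _ ≤ (‖FT1 μ f (ω n)‖₊ : ℝ≥0∞) + ‖-(FT1 μ f (ω n) - FT1 μ f (lam n))‖₊ := by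
          exact_mod_cast nnnorm_add_le _ _
      _ = _ := by rw [nnnorm_neg]
  constructor
  · have hchain : ENNReal.ofReal (A ^ (1/q)) * N ≤ Sω ^ (1/q:ℝ) + ENNReal.ofReal (R ^ (1/q)) * N :=
      hAq.trans (htri2.trans (add_le_add_right hDq _))
    have hsub : ENNReal.ofReal (A ^ (1/q) - R ^ (1/q)) * N ≤ Sω ^ (1/q:ℝ) := by
      rw [ENNReal.ofReal_sub _ (Real.rpow_nonneg hR.le _), ENNReal.sub_mul (fun _ _ => hNtop)]
      exact tsub_le_iff_right.2 hchain
    calc ENNReal.ofReal ((A^(1/q) - R^(1/q))^q) * N^(q:ℝ)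
        = (ENNReal.ofReal (A^(1/q) - R^(1/q)) * N)^(q:ℝ) := by
          rw [ENNReal.mul_rpow_of_nonneg _ _ hq0.le,
            ENNReal.ofReal_rpow_of_nonneg hsmall.le hq0.le]
      _ ≤ (Sω^(1/q:ℝ))^(q:ℝ) := ENNReal.rpow_le_rpow hsub hq0.le
      _ = Sω := hrq _
  · have hchain2 : Sω ^ (1/q:ℝ) ≤ ENNReal.ofReal (B^(1/q) + R^(1/q)) * N := by
      refine htri1.trans ?_
      rw [ENNReal.ofReal_add (Real.rpow_nonneg hB.le _) (Real.rpow_nonneg hR.le _), add_mul]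
      exact add_le_add hSlq hDq
    calc Sω = (Sω^(1/q:ℝ))^(q:ℝ) := (hrq _).symm
      _ ≤ (ENNReal.ofReal (B^(1/q) + R^(1/q)) * N)^(q:ℝ) := ENNReal.rpow_le_rpow hchain2 hq0.le
      _ = ENNReal.ofReal ((B^(1/q) + R^(1/q))^q) * N^(q:ℝ) := by
          rw [ENNReal.mul_rpow_of_nonneg _ _ hq0.le,
            ENNReal.ofReal_rpow_of_nonneg (by positivity) hq0.le]
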